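/- Let n be a positive integer, Y a symmetric n×n real matrix, X an n×n real matrix, and χ: ℝⁿ → ℂ an arbitrary function. Define the transformed function (Φχ)(r) = exp(−(1/4)·rᵀY r) · χ(Xᵀ r). Then for all r_A, r_B ∈ ℝⁿ: (Φχ)((r_A + r_B)/√2) · (Φχ)((r_B − r_A)/√2) = exp(−(1/4)·r_AᵀY r_A) · exp(−(1/4)·r_BᵀY r_B) · χ(Xᵀ(r_A + r_B)/√2) · χ(Xᵀ(r_B − r_A)/√2). In other words, applying a (zero-displacement) Gaussian channel to both copies before the 50:50 beam splitter produces the same characteristic function as applying the same channel locally to both output modes after the beam splitter. -/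
import Mathlib


open scoped Matrix

lemma cross_symm {n : ℕ} (Y : Matrix (Fin n) (Fin n) ℝ) (hY : Y.IsSymm)
    (a b : Fin n → ℝ) : a ⬝ᵥ Y.mulVec b = b ⬝ᵥ Y.mulVec a := by
  rw [Matrix.dotProduct_mulVec, ← Matrix.mulVec_transpose, hY.eq, dotProduct_comm]

lemma quad_sum {n : ℕ} (Y : Matrix (Fin n) (Fin n) ℝ) (hY : Y.IsSymm)
    (a b : Fin n → ℝ) :
    ((Real.sqrt 2)⁻¹ • (a + b)) ⬝ᵥ Y.mulVec ((Real.sqrt 2)⁻¹ • (a + b))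
      + ((Real.sqrt 2)⁻¹ • (b - a)) ⬝ᵥ Y.mulVec ((Real.sqrt 2)⁻¹ • (b - a))
      = a ⬝ᵥ Y.mulVec a + b ⬝ᵥ Y.mulVec b := by
  have hs : (Real.sqrt 2)⁻¹ * (Real.sqrt 2)⁻¹ = 1/2 := by
    rw [← mul_inv]
    norm_num [Real.mul_self_sqrt]
  have hc := cross_symm Y hY a b
  simp only [Matrix.mulVec_smul, dotProduct_smul, smul_dotProduct,
    Matrix.mulVec_add, Matrix.mulVec_sub, dotProduct_add, add_dotProduct,
    dotProduct_sub, sub_dotProduct, smul_eq_mul]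
  linear_combination (2*(a ⬝ᵥ Y.mulVec a) + 2*(b ⬝ᵥ Y.mulVec b)) * hs

/-- A zero-displacement Gaussian channel, acting on characteristic
functions as `(Φχ)(r) = exp(−(1/4)·rᵀYr)·χ(Xᵀr)`, commutes with the 50:50 beam splitter:
applying it to both copies before the beam splitter equals applying it locally to both
outputs after the beam splitter. -/
theorem gaussian_channel_commutes_with_beam_splitter
    (n : ℕ) (hn : 0 < n)
    (Y X : Matrix (Fin n) (Fin n) ℝ) (hY : Y.IsSymm)
    (χ Φχ : (Fin n → ℝ) → ℂ)
    (hΦ : ∀ r, Φχ r = Complex.exp (-(1/4 : ℂ) * ((r ⬝ᵥ Y.mulVec r : ℝ) : ℂ))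
        * χ (X.transpose.mulVec r)) :
    ∀ rA rB : Fin n → ℝ,
      Φχ ((Real.sqrt 2)⁻¹ • (rA + rB)) * Φχ ((Real.sqrt 2)⁻¹ • (rB - rA)) =
        Complex.exp (-(1/4 : ℂ) * ((rA ⬝ᵥ Y.mulVec rA : ℝ) : ℂ))
        * Complex.exp (-(1/4 : ℂ) * ((rB ⬝ᵥ Y.mulVec rB : ℝ) : ℂ))
        * χ (X.transpose.mulVec ((Real.sqrt 2)⁻¹ • (rA + rB)))
        * χ (X.transpose.mulVec ((Real.sqrt 2)⁻¹ • (rB - rA))) := by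
  intro rA rB
  rw [hΦ, hΦ]
  have hq := quad_sum Y hY rA rB
  have : (-(1/4 : ℂ)) * ((((Real.sqrt 2)⁻¹ • (rA + rB)) ⬝ᵥ Y.mulVec ((Real.sqrt 2)⁻¹ • (rA + rB)) : ℝ) : ℂ)
      + (-(1/4 : ℂ)) * ((((Real.sqrt 2)⁻¹ • (rB - rA)) ⬝ᵥ Y.mulVec ((Real.sqrt 2)⁻¹ • (rB - rA)) : ℝ) : ℂ)
      = (-(1/4 : ℂ)) * ((rA ⬝ᵥ Y.mulVec rA : ℝ) : ℂ) + (-(1/4 : ℂ)) * ((rB ⬝ᵥ Y.mulVec rB : ℝ) : ℂ) := by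
    have := congrArg (fun x : ℝ => ((x : ℂ))) hq
    push_cast at this ⊢
    ring_nf
    ring_nf at this
    linear_combination (-(1/4 : ℂ)) * this
  have key : Complex.exp (-(1/4 : ℂ) * ((((Real.sqrt 2)⁻¹ • (rA + rB)) ⬝ᵥ Y.mulVec ((Real.sqrt 2)⁻¹ • (rA + rB)) : ℝ) : ℂ))
      * Complex.exp (-(1/4 : ℂ) * ((((Real.sqrt 2)⁻¹ • (rB - rA)) ⬝ᵥ Y.mulVec ((Real.sqrt 2)⁻¹ • (rB - rA)) : ℝ) : ℂ))
      = Complex.exp (-(1/4 : ℂ) * ((rA ⬝ᵥ Y.mulVec rA : ℝ) : ℂ))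
      * Complex.exp (-(1/4 : ℂ) * ((rB ⬝ᵥ Y.mulVec rB : ℝ) : ℂ)) := by
    rw [← Complex.exp_add, ← Complex.exp_add, this]
  linear_combination χ (X.transpose.mulVec ((Real.sqrt 2)⁻¹ • (rA + rB))) * χ (X.transpose.mulVec ((Real.sqrt 2)⁻¹ • (rB - rA))) * key
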